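/- Let $h : (0,\infty) \to [0,\infty)$ be nonincreasing, locally integrable, with $h^{**}(t) = \frac{1}{t}\int_0^t h(s)\,ds$. Then for all $t>0$: $h^{**}(t) - h(t) \leq \frac{1}{t}\int_0^t [h(s/2) - h(s)]\,ds + [h(t/2) - h(t)]$. -/

import Mathlib

open Set MeasureTheory

/-- For `h ≥ 0` nonincreasing and locally integrable on `(0,∞)`:
`h^{**}(t) - h(t) ≤ (1/t)∫_0^t [h(s/2) - h(s)] ds + [h(t/2) - h(t)]`. -/
theorem stmt11 (h : ℝ → ℝ)
    (h0 : ∀ t, 0 < t → 0 ≤ h t) (hmono : AntitoneOn h (Ioi 0))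
    (hloc : ∀ t, 0 < t → IntegrableOn h (Ioc 0 t))
    (t : ℝ) (ht : 0 < t) :
    (1/t) * (∫ s in Ioc (0:ℝ) t, h s) - h t
      ≤ (1/t) * (∫ s in Ioc (0:ℝ) t, (h (s/2) - h s)) + (h (t/2) - h t) := by
  have ht2 : (0:ℝ) < t/2 := by linarith
  have hIt : IntervalIntegrable h volume 0 t :=
    (intervalIntegrable_iff_integrableOn_Ioc_of_le ht.le).mpr (hloc t ht)
  have hIt2 : IntervalIntegrable h volume 0 (t/2) :=
    (intervalIntegrable_iff_integrableOn_Ioc_of_le ht2.le).mpr (hloc _ ht2)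
  have hImid : IntervalIntegrable h volume (t/2) t :=
    (intervalIntegrable_iff_integrableOn_Ioc_of_le (by linarith)).mpr
      ((hloc t ht).mono_set (Ioc_subset_Ioc (by linarith) le_rfl))
  have hIcomp : IntervalIntegrable (fun s => h (s/2)) volume 0 t := by
    have := hIt2.comp_mul_right (c := 1/2)
    have e : t / 2 / (1/2) = t := by ring
    rw [zero_div, e] at this
    convert this using 2 with x
    rw [mul_one_div]
  -- rewrite set integrals as interval integrals
  rw [← intervalIntegral.integral_of_le ht.le, ← intervalIntegral.integral_of_le ht.le]
  have hsplit : (∫ s in (0:ℝ)..t, h s)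
      = (∫ s in (0:ℝ)..(t/2), h s) + ∫ s in (t/2)..t, h s :=
    (intervalIntegral.integral_add_adjacent_intervals hIt2 hImid).symm
  have hsub : (∫ s in (0:ℝ)..t, (h (s/2) - h s))
      = (∫ s in (0:ℝ)..t, h (s/2)) - ∫ s in (0:ℝ)..t, h s :=
    intervalIntegral.integral_sub hIcomp hIt
  have hcomp : (∫ s in (0:ℝ)..t, h (s/2)) = 2 * ∫ s in (0:ℝ)..(t/2), h s := by
    rw [intervalIntegral.integral_comp_div (f := h) (two_ne_zero)]
    norm_num [smul_eq_mul]
  have hmid : (∫ s in (t/2)..t, h s) ≤ (t/2) * h (t/2) := by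
    have : (∫ s in (t/2)..t, h s) ≤ ∫ _ in (t/2)..t, h (t/2) := by
      apply intervalIntegral.integral_mono_on (by linarith) hImid
        (intervalIntegrable_const)
      intro x hx
      exact hmono (mem_Ioi.mpr ht2) (mem_Ioi.mpr (lt_of_lt_of_le ht2 hx.1)) hx.1
    refine this.trans_eq ?_
    rw [intervalIntegral.integral_const, smul_eq_mul]
    ring
  have hql : h t ≤ h (t/2) := hmono (mem_Ioi.mpr ht2) (mem_Ioi.mpr ht) (by linarith)
  rw [hsub, hcomp, hsplit]
  have h1t : 0 < 1/t := by positivity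
  set A := ∫ s in (0:ℝ)..(t/2), h s with hA
  set B := ∫ s in (t/2)..t, h s with hB
  set c := h (t/2) with hc
  set u := 1/t with hu
  have key2 : 2 * B ≤ t * c := by linarith [hmid]
  have key3 : u * (2 * B) ≤ u * (t * c) := mul_le_mul_of_nonneg_left key2 h1t.le
  have htt : u * (t * c) = c := by rw [hu]; field_simp
  rw [htt] at key3
  nlinarith [key3]
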